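/- Let X be a set, K : X × X → ℂ a bounded function, and x₁, …, xₙ ∈ X pairwise distinct points such that the kernel matrix K[x] is nonsingular. Then the following are equivalent: (i) ‖(K[x])^{-1} K_x(t)‖₁ ≤ 1 for every t ∈ X; (ii) for every c ∈ ℂⁿ, sup_{t∈X} |∑_{j=1}^n c_j K(t, x_j)| = max_{1≤k≤n} |∑_{j=1}^n c_j K(x_k, x_j)|. -/

import Mathlib

open Matrix
open scoped ENNReal NNReal

/-- The kernel matrix `K[x]`, with `(j,k)` entry `K(x_k, x_j)`. -/
noncomputable def kernelMatrix {X : Type*} (K : X → X → ℂ) {n : ℕ} (x : Fin n → X) :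
    Matrix (Fin n) (Fin n) ℂ := Matrix.of fun j k => K (x k) (x j)

/-- The vector `K_x(t)`, with `j`-th entry `K(t, x_j)`. -/
noncomputable def kernelVec {X : Type*} (K : X → X → ℂ) {n : ℕ} (x : Fin n → X) (t : X) :
    Fin n → ℂ := fun j => K t (x j)

/-- The `ℓ¹` norm of a vector in `ℂⁿ`. -/
noncomputable def l1norm {n : ℕ} (v : Fin n → ℂ) : ℝ := ∑ j, ‖v j‖

theorem stmt_10 {X : Type*} (K : X → X → ℂ) (M : ℝ)
    (hK : ∀ s t, ‖K s t‖ ≤ M)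
    (n : ℕ) (x : Fin n → X) (hx : Function.Injective x)
    (hdet : IsUnit (kernelMatrix K x).det) :
    (∀ t : X, l1norm ((kernelMatrix K x)⁻¹ *ᵥ kernelVec K x t) ≤ 1)
      ↔
    ∀ c : Fin n → ℂ,
      (⨆ t : X, (‖∑ j, c j * K t (x j)‖₊ : ℝ≥0∞)) =
        ⨆ k : Fin n, (‖∑ j, c j * K (x k) (x j)‖₊ : ℝ≥0∞) := by
  set A := kernelMatrix K x with hA
  have hAinv : A⁻¹ * A = 1 := Matrix.nonsing_inv_mul A hdet
  have hAinv' : A * A⁻¹ = 1 := Matrix.mul_nonsing_inv A hdet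
  have key1 : ∀ (c : Fin n → ℂ) (k : Fin n), ∑ j, c j * K (x k) (x j) = (c ᵥ* A) k := by
    intro c k
    simp [Matrix.vecMul, dotProduct, hA, kernelMatrix]
  have keyAv : ∀ t, A *ᵥ (A⁻¹ *ᵥ kernelVec K x t) = kernelVec K x t := by
    intro t
    rw [Matrix.mulVec_mulVec, hAinv', Matrix.one_mulVec]
  have key2 : ∀ (c : Fin n → ℂ) t, ∑ j, c j * K t (x j)
      = ∑ j, (c ᵥ* A) j * (A⁻¹ *ᵥ kernelVec K x t) j := by
    intro c t
    have : c ⬝ᵥ kernelVec K x t = (c ᵥ* A) ⬝ᵥ (A⁻¹ *ᵥ kernelVec K x t) := by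
      conv_lhs => rw [← keyAv t]
      rw [Matrix.dotProduct_mulVec]
    simpa [dotProduct, kernelVec] using this
  constructor
  · intro h c
    apply le_antisymm
    · refine iSup_le fun t => ?_
      set w := A⁻¹ *ᵥ kernelVec K x t with hw
      have hsum : (∑ j, (‖w j‖₊ : ℝ≥0∞)) ≤ 1 := by
        have h1 := h t
        rw [l1norm] at h1
        have h2 : (∑ j, ‖w j‖₊ : ℝ≥0) ≤ 1 := by
          rw [← NNReal.coe_le_coe]
          push_cast
          simpa [hw] using h1
        calc (∑ j, (‖w j‖₊ : ℝ≥0∞)) = ((∑ j, ‖w j‖₊ : ℝ≥0) : ℝ≥0∞) := by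
              push_cast; rfl
          _ ≤ 1 := by exact_mod_cast h2
      set C : ℝ≥0∞ := ⨆ k : Fin n, (‖(c ᵥ* A) k‖₊ : ℝ≥0∞) with hC
      have hmain : (‖∑ j, c j * K t (x j)‖₊ : ℝ≥0∞) ≤ C := by
        rw [key2 c t, ← hw]
        calc (‖∑ j, (c ᵥ* A) j * w j‖₊ : ℝ≥0∞)
            ≤ ∑ j, (‖(c ᵥ* A) j * w j‖₊ : ℝ≥0∞) := by
              exact_mod_cast nnnorm_sum_le Finset.univ fun j => (c ᵥ* A) j * w j
          _ = ∑ j, (‖(c ᵥ* A) j‖₊ : ℝ≥0∞) * (‖w j‖₊ : ℝ≥0∞) := by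
              simp [nnnorm_mul, ENNReal.coe_mul]
          _ ≤ ∑ j, C * (‖w j‖₊ : ℝ≥0∞) := by
              refine Finset.sum_le_sum fun j _ => ?_
              exact mul_le_mul_left (le_iSup (fun k => (‖(c ᵥ* A) k‖₊ : ℝ≥0∞)) j) _
          _ = C * ∑ j, (‖w j‖₊ : ℝ≥0∞) := by rw [Finset.mul_sum]
          _ ≤ C * 1 := mul_le_mul_right hsum C
          _ = C := mul_one C
      calc (‖∑ j, c j * K t (x j)‖₊ : ℝ≥0∞) ≤ C := hmain
        _ = ⨆ k : Fin n, (‖∑ j, c j * K (x k) (x j)‖₊ : ℝ≥0∞) := by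
          rw [hC]; exact iSup_congr fun k => by rw [key1 c k]
    · exact iSup_le fun k => le_iSup (fun t => (‖∑ j, c j * K t (x j)‖₊ : ℝ≥0∞)) (x k)
  · intro h t
    set w := A⁻¹ *ᵥ kernelVec K x t with hw
    set s : Fin n → ℂ := fun j =>
      if w j = 0 then 0 else (starRingEnd ℂ) (w j) / ((‖w j‖ : ℝ) : ℂ) with hs
    have hsw : ∀ j, s j * w j = ((‖w j‖ : ℝ) : ℂ) := by
      intro j
      by_cases hj : w j = 0
      · simp [hs, hj]
      · have habs : ((‖w j‖ : ℝ) : ℂ) ≠ 0 := by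
          exact_mod_cast (norm_ne_zero_iff.mpr hj)
        rw [hs]
        simp only [hj, if_false]
        rw [div_mul_eq_mul_div, mul_comm, Complex.mul_conj]
        rw [← Complex.sq_norm]
        push_cast
        field_simp
    have hsb : ∀ j, ‖s j‖₊ ≤ 1 := by
      intro j
      by_cases hj : w j = 0
      · simp [hs, hj]
      · have habs : ‖w j‖ ≠ 0 := norm_ne_zero_iff.mpr hj
        rw [hs]
        simp only [hj, if_false]
        rw [← NNReal.coe_le_coe]
        push_cast
        rw [norm_div]
        simp only [Complex.norm_conj, Complex.norm_real, Real.norm_eq_abs,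
          abs_abs]
        rw [abs_of_nonneg (norm_nonneg _), div_self habs]
    set c : Fin n → ℂ := s ᵥ* A⁻¹ with hc
    have hcA : c ᵥ* A = s := by
      rw [hc, Matrix.vecMul_vecMul, hAinv, Matrix.vecMul_one]
    have hsum : ∑ j, c j * K t (x j) = ((l1norm w : ℝ) : ℂ) := by
      rw [key2 c t, ← hw, hcA, l1norm]
      push_cast
      exact Finset.sum_congr rfl fun j _ => hsw j
    have hle : ((‖((l1norm w : ℝ) : ℂ)‖₊ : ℝ≥0) : ℝ≥0∞) ≤ 1 := by
      calc ((‖((l1norm w : ℝ) : ℂ)‖₊ : ℝ≥0) : ℝ≥0∞)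
          = (‖∑ j, c j * K t (x j)‖₊ : ℝ≥0∞) := by rw [hsum]
        _ ≤ ⨆ t' : X, (‖∑ j, c j * K t' (x j)‖₊ : ℝ≥0∞) :=
            le_iSup (fun t' => (‖∑ j, c j * K t' (x j)‖₊ : ℝ≥0∞)) t
        _ = ⨆ k : Fin n, (‖∑ j, c j * K (x k) (x j)‖₊ : ℝ≥0∞) := h c
        _ ≤ 1 := by
            refine iSup_le fun k => ?_
            rw [key1 c k, hcA]
            exact_mod_cast hsb k
    have hnn : 0 ≤ l1norm w := Finset.sum_nonneg fun j _ => norm_nonneg _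
    have : ‖((l1norm w : ℝ) : ℂ)‖ ≤ 1 := by
      have h2 : (‖((l1norm w : ℝ) : ℂ)‖₊ : ℝ≥0) ≤ 1 := by exact_mod_cast hle
      exact_mod_cast h2
    rwa [Complex.norm_real, Real.norm_eq_abs, abs_of_nonneg hnn] at this
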